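/- Stochastic descent relation: for each t, the POLK iterates satisfy E[‖f_{t+1} − f*‖_H² | F_t] ≤ ‖f_t − f*‖_H² − 2η_t (R(f_t) − R(f*)) + 2ε_t ‖f_t − f*‖_H + η_t² σ² almost surely. -/

import Mathlib

open MeasureTheory Filter Set
open scoped RealInnerProductSpace NNReal Topology

section Scalar

/-- Derivative of a Lipschitz function is bounded. -/
lemma polk_deriv_bound {g : ℝ → ℝ} {C : ℝ≥0} {d z : ℝ}
    (hlip : LipschitzWith C g) (h : HasDerivAt g d z) : |d| ≤ C := by
  have h1 : ‖ContinuousLinearMap.smulRight (1 : ℝ →L[ℝ] ℝ) d‖ ≤ C :=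
    (h.hasFDerivAt).le_of_lipschitz hlip
  have h2 : |d| = ‖(ContinuousLinearMap.smulRight (1 : ℝ →L[ℝ] ℝ) d) 1‖ := by
    simp [Real.norm_eq_abs]
  calc |d| = ‖(ContinuousLinearMap.smulRight (1 : ℝ →L[ℝ] ℝ) d) 1‖ := h2
    _ ≤ ‖ContinuousLinearMap.smulRight (1 : ℝ →L[ℝ] ℝ) d‖ * ‖(1:ℝ)‖ :=
        ContinuousLinearMap.le_opNorm _ _
    _ ≤ C * 1 := by rw [norm_one]; exact mul_le_mul_of_nonneg_right h1 zero_le_one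
    _ = C := mul_one _

/-- Scalar convex gradient inequality at 0. -/
lemma polk_convex_deriv_le {g : ℝ → ℝ} (hg : ConvexOn ℝ Set.univ g) {d : ℝ}
    (hd : HasDerivAt g d 0) : d ≤ g 1 - g 0 := by
  have htend : Tendsto (slope g 0) (𝓝[>] 0) (𝓝 d) :=
    (hasDerivAt_iff_tendsto_slope.1 hd).mono_left
      (nhdsWithin_mono 0 (fun x hx => ne_of_gt hx))
  refine le_of_tendsto htend ?_
  filter_upwards [Ioo_mem_nhdsGT_of_mem (Set.mem_Ico.2 ⟨le_refl (0:ℝ), zero_lt_one⟩)]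
    with s hs
  obtain ⟨hs0, hs1⟩ := hs
  have hconv := hg.2 (Set.mem_univ (0:ℝ)) (Set.mem_univ (1:ℝ))
    (by linarith : (0:ℝ) ≤ 1 - s) (le_of_lt hs0) (by ring)
  have hmid : (1 - s) • (0:ℝ) + s • (1:ℝ) = s := by simp
  rw [hmid] at hconv
  rw [slope_def_field, sub_zero]
  rw [div_le_iff₀ hs0]
  simp only [smul_eq_mul] at hconv
  nlinarith

end Scalar

section Gradient

variable {H : Type*} [NormedAddCommGroup H] [InnerProductSpace ℝ H] [CompleteSpace H]

lemma polk_gradient_ineq {R : H → 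
ℝ} (hRconv : ConvexOn ℝ Set.univ R)
    {G a : H} (hG : HasGradientAt R G a) (b : H) :
    ⟪G, b - a⟫ ≤ R b - R a := by
  have hd : HasDerivAt (fun s : ℝ => a + s • (b - a)) (b - a) 0 := by
    simpa using ((hasDerivAt_id (0:ℝ)).smul_const (b - a)).const_add a
  have h0 : a + (0:ℝ) • (b - a) = a := by simp
  have hfd : HasFDerivAt R ((InnerProductSpace.toDual ℝ H) G) (a + (0:ℝ) • (b - a)) := by
    rw [h0]; exact hG.hasFDerivAt
  have hcomp : HasDerivAt (fun s : ℝ => R (a + s • (b - a)))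
      (((InnerProductSpace.toDual ℝ H) G) (b - a)) 0 := hfd.comp_hasDerivAt 0 hd
  rw [InnerProductSpace.toDual_apply_apply] at hcomp
  have hconvg : ConvexOn ℝ Set.univ (fun s : ℝ => R (a + s • (b - a))) := by
    refine ⟨convex_univ, fun s _ s' _ α β hα hβ hαβ => ?_⟩
    have h := hRconv.2 (Set.mem_univ (a + s • (b - a))) (Set.mem_univ (a + s' • (b - a)))
      hα hβ hαβ
    have hβ' : β = 1 - α := by linarith
    subst hβ'
    convert h using 2
    simp only [smul_eq_mul]
    module
  have := polk_convex_deriv_le hconvg hcomp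
  simpa using this

lemma polk_minimizer_mem {R : H → ℝ} (hRconv : ConvexOn ℝ Set.univ R)
    {G a : H} (hG : HasGradientAt R G a) (hG0 : G = 0) (b : H) : R a ≤ R b := by
  have := polk_gradient_ineq hRconv hG b
  rw [hG0] at this
  simp only [inner_zero_left] at this
  linarith

end Gradient

section Unique

variable {H : Type*} [NormedAddCommGroup H] [InnerProductSpace ℝ H]
variable {X : Type*} {Y : Type*} [MeasurableSpace X] [MeasurableSpace Y]

lemma polk_minimizer_unique
    (φ : X → H) (ℓ : ℝ → Y → ℝ)
    (hconv : ∀ y, ConvexOn ℝ Set.univ fun z => ℓ z y)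
    (μ : Measure (X × Y))
    {lam : ℝ} (hlam : 0 < lam)
    {R : H → ℝ}
    (hR : ∀ f, R f = (∫ p, ℓ ⟪f, φ p.1⟫ p.2 ∂μ) + lam / 2 * ‖f‖ ^ 2)
    (hRconv : ConvexOn ℝ Set.univ R)
    {fstar : H} (hfstar : ∀ f, R fstar ≤ R f)
    {g : H} (hg : R g ≤ R fstar) : g = fstar := by
  by_contra hne
  set u := g - fstar with hu
  have hu0 : u ≠ 0 := sub_ne_zero.2 hne
  have hU : (0:ℝ) < ‖u‖ ^ 2 := pow_pos (norm_pos_iff.2 hu0) 2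
  have hgf : R g = R fstar := le_antisymm hg (hfstar g)
  have hRconst : ∀ s : ℝ, s ∈ Set.Icc (0:ℝ) 1 → R (fstar + s • u) = R fstar := by
    rintro s ⟨hs0, hs1⟩
    have h := hRconv.2 (Set.mem_univ fstar) (Set.mem_univ g)
      (by linarith : (0:ℝ) ≤ 1 - s) hs0 (by ring)
    have harg : (1 - s) • fstar + s • g = fstar + s • u := by rw [hu]; module
    rw [harg, hgf] at h
    have h' : (1 - s) • R fstar + s • R fstar = R fstar := by
      simp only [smul_eq_mul]; ring
    rw [h'] at h
    exact le_antisymm h (hfstar _)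
  have hq : ∀ s : ℝ, ‖fstar + s • u‖ ^ 2
      = ‖fstar‖ ^ 2 + 2 * s * ⟪fstar, u⟫ + s ^ 2 * ‖u‖ ^ 2 := by
    intro s
    rw [norm_add_sq_real, real_inner_smul_right, norm_smul, Real.norm_eq_abs, mul_pow, sq_abs]
    ring
  set I : ℝ → ℝ := fun s => ∫ p, ℓ ⟪fstar + s • u, φ p.1⟫ p.2 ∂μ with hIdef
  have hIq : ∀ s ∈ Set.Icc (0:ℝ) 1, I s = R fstar - lam / 2 * ‖fstar + s • u‖ ^ 2 := by
    intro s hs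
    have h2 := hR (fstar + s • u)
    rw [hRconst s hs] at h2
    simp only [hIdef]
    linarith
  set B : Set ℝ := {s | s ∈ Set.Icc (0:ℝ) 1 ∧
    ¬ Integrable (fun p : X × Y => ℓ ⟪fstar + s • u, φ p.1⟫ p.2) μ} with hBdef
  have hBq : ∀ s ∈ B, lam / 2 * ‖fstar + s • u‖ ^ 2 = R fstar := by
    intro s hs
    have h0 : I s = 0 := integral_undef hs.2
    have h1 := hIq s hs.1
    linarith
  have hBk : ∀ s ∈ B, ∀ s' ∈ B, s ≠ s' → s + s' = -2 * ⟪fstar, u⟫ / ‖u‖ ^ 2 := by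
    intro s hs s' hs' hne'
    have hl2 : lam / 2 ≠ 0 := ne_of_gt (half_pos hlam)
    have h1 : ‖fstar + s • u‖ ^ 2 = ‖fstar + s' • u‖ ^ 2 :=
      mul_left_cancel₀ hl2 (by rw [hBq s hs, hBq s' hs'])
    rw [hq s, hq s'] at h1
    have hss : s - s' ≠ 0 := sub_ne_zero.2 hne'
    have hfac : (s - s') * (2 * ⟪fstar, u⟫ + (s + s') * ‖u‖ ^ 2) = 0 := by
      linear_combination h1
    have h2 : 2 * ⟪fstar, u⟫ + (s + s') * ‖u‖ ^ 2 = 0 :=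
      (mul_eq_zero.1 hfac).resolve_left hss
    field_simp
    linarith
  have hBfin : B.Finite := by
    rcases Set.eq_empty_or_nonempty B with h | ⟨a, ha⟩
    · simp [h]
    · refine ((Set.finite_singleton
        (-2 * ⟪fstar, u⟫ / ‖u‖ ^ 2 - a)).insert a).subset ?_
      intro s hs
      by_cases h : s = a
      · exact Set.mem_insert_iff.2 (Or.inl h)
      · refine Set.mem_insert_iff.2 (Or.inr ?_)
        have h2 := hBk s hs a ha h
        simp only [Set.mem_singleton_iff]
        linarith
  have hfin2 : ((fun x : ℝ => 2 * x) ⁻¹' B).Finite :=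
    hBfin.preimage (fun x _ y _ h => by linarith)
  have hfin3 : ((fun x : ℝ => 3 * x) ⁻¹' B).Finite :=
    hBfin.preimage (fun x _ y _ h => by linarith)
  have hinf : (Set.Ioc (0:ℝ) (1/3)).Infinite := Set.Ioc_infinite (by norm_num)
  obtain ⟨x, hxmem, hxbad⟩ := (hinf.diff ((hBfin.union hfin2).union hfin3)).nonempty
  obtain ⟨hx0, hx13⟩ := hxmem
  simp only [Set.mem_union, Set.mem_preimage, not_or] at hxbad
  obtain ⟨⟨hxB, h2xB⟩, h3xB⟩ := hxbad
  have hxIcc : x ∈ Set.Icc (0:ℝ) 1 := ⟨le_of_lt hx0, by linarith⟩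
  have h2xIcc : 2 * x ∈ Set.Icc (0:ℝ) 1 := ⟨by linarith, by linarith⟩
  have h3xIcc : 3 * x ∈ Set.Icc (0:ℝ) 1 := ⟨by linarith, by linarith⟩
  have hint : ∀ s : ℝ, s ∈ Set.Icc (0:ℝ) 1 → s ∉ B →
      Integrable (fun p : X × Y => ℓ ⟪fstar + s • u, φ p.1⟫ p.2) μ := by
    intro s hs hsB
    by_contra h
    exact hsB ⟨hs, h⟩
  have I1 := hint x hxIcc hxB
  have I2 := hint (2 * x) h2xIcc h2xB
  have I3 := hint (3 * x) h3xIcc h3xB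
  have hpt : ∀ p : X × Y, ℓ ⟪fstar + (2 * x) • u, φ p.1⟫ p.2
      ≤ (1/2) * ℓ ⟪fstar + x • u, φ p.1⟫ p.2 + (1/2) * ℓ ⟪fstar + (3 * x) • u, φ p.1⟫ p.2 := by
    intro p
    have h := (hconv p.2).2 (Set.mem_univ ⟪fstar + x • u, φ p.1⟫)
      (Set.mem_univ ⟪fstar + (3 * x) • u, φ p.1⟫)
      (by norm_num : (0:ℝ) ≤ 1/2) (by norm_num : (0:ℝ) ≤ 1/2) (by norm_num)
    have harg : (1/2 : ℝ) • ⟪fstar + x • u, φ p.1⟫ + (1/2 : ℝ) • ⟪fstar + (3 * x) • u, φ p.1⟫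
        = ⟪fstar + (2 * x) • u, φ p.1⟫ := by
      simp only [inner_add_left, real_inner_smul_left, smul_eq_mul]
      ring
    rw [harg] at h
    simpa using h
  have hmono : I (2 * x) ≤ (1/2) * I x + (1/2) * I (3 * x) := by
    have hrhs : Integrable (fun p : X × Y => (1/2) * ℓ ⟪fstar + x • u, φ p.1⟫ p.2
        + (1/2) * ℓ ⟪fstar + (3 * x) • u, φ p.1⟫ p.2) μ :=
      (I1.const_mul _).add (I3.const_mul _)
    calc I (2 * x) ≤ ∫ p, ((1/2) * ℓ ⟪fstar + x • u, φ p.1⟫ p.2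
        + (1/2) * ℓ ⟪fstar + (3 * x) • u, φ p.1⟫ p.2) ∂μ := integral_mono I2 hrhs hpt
      _ = (1/2) * I x + (1/2) * I (3 * x) := by
        rw [integral_add (I1.const_mul _) (I3.const_mul _), integral_const_mul,
          integral_const_mul]
  rw [hIq x hxIcc, hIq (2 * x) h2xIcc, hIq (3 * x) h3xIcc, hq x, hq (2 * x), hq (3 * x)] at hmono
  nlinarith [mul_pos (half_pos hlam) (mul_pos (pow_pos hx0 2) hU)]

end Unique

section PullOut

variable {α : Type*} {H : Type*} [NormedAddCommGroup H] [InnerProductSpace ℝ H] [CompleteSpace H]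
variable {m m0 : MeasurableSpace α} {μ : Measure α}

lemma polk_integrable_inner_of_bound {v g : α → H} (hv : AEStronglyMeasurable v μ)
    (c : ℝ) (hvb : ∀ x, ‖v x‖ ≤ c) (hg : Integrable g μ) :
    Integrable (fun x => ⟪v x, g x⟫) μ :=
  (hg.norm.const_mul c).mono' (hv.inner hg.aestronglyMeasurable)
    (Eventually.of_forall fun x =>
      le_trans (norm_inner_le_norm _ _) (mul_le_mul_of_nonneg_right (hvb x) (norm_nonneg _)))

lemma polk_condexp_const_inner (hm : m ≤ m0) [SigmaFinite (μ.trim hm)]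
    {g : α → H} (hg : Integrable g μ) (w : H) :
    μ[fun x => ⟪w, g x⟫|m] =ᵐ[μ] fun x => ⟪w, (μ[g|m]) x⟫ := by
  refine (ae_eq_condExp_of_forall_setIntegral_eq hm (hg.const_inner w)
    (fun s _ _ => (integrable_condExp.const_inner w).integrableOn)
    (fun s hs hμs => ?_)
    ((stronglyMeasurable_const.inner stronglyMeasurable_condExp).aestronglyMeasurable)).symm
  rw [integral_inner integrable_condExp.integrableOn, integral_inner hg.integrableOn,
    setIntegral_condExp hm hg hs]

lemma polk_condexp_simpleFunc_inner (hm : m ≤ m0) [SigmaFinite (μ.trim hm)]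
    (v : @SimpleFunc α m H) {g : α → H} (hg : Integrable g μ) :
    μ[fun x => ⟪v x, g x⟫|m] =ᵐ[μ] fun x => ⟪v x, (μ[g|m]) x⟫ := by
  apply @SimpleFunc.induction _ _ m _
    (fun v : @SimpleFunc α m H =>
      μ[fun x => ⟪v x, g x⟫|m] =ᵐ[μ] fun x => ⟪v x, (μ[g|m]) x⟫)
    (fun c s hs => ?_) (fun v₁ v₂ _ h₁ h₂ => ?_) v
  · classical
    simp only [@SimpleFunc.coe_piecewise _ _ m, @SimpleFunc.coe_const _ _ m,
      @SimpleFunc.coe_zero _ _ m, Set.piecewise_eq_indicator, @SimpleFunc.const_zero _ _ m]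
    have hswap : ∀ (gg : α → H) (x : α),
        ⟪Set.indicator s (Function.const α c) x, gg x⟫
          = s.indicator (fun y => ⟪c, gg y⟫) x := by
      intro gg x
      by_cases hx : x ∈ s <;> simp [hx]
    simp_rw [hswap]
    refine (condExp_indicator (hg.const_inner c) hs).trans ?_
    filter_upwards [polk_condexp_const_inner hm hg c] with x hx
    by_cases hxs : x ∈ s <;> simp [hxs, hx]
  · obtain ⟨c₁, hc₁⟩ := @SimpleFunc.exists_forall_norm_le _ _ m _ v₁
    obtain ⟨c₂, hc₂⟩ := @SimpleFunc.exists_forall_norm_le _ _ m _ v₂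
    have hint₁ : Integrable (fun x => ⟪v₁ x, g x⟫) μ :=
      polk_integrable_inner_of_bound
        ((v₁.stronglyMeasurable.mono hm).aestronglyMeasurable) c₁ hc₁ hg
    have hint₂ : Integrable (fun x => ⟪v₂ x, g x⟫) μ :=
      polk_integrable_inner_of_bound
        ((v₂.stronglyMeasurable.mono hm).aestronglyMeasurable) c₂ hc₂ hg
    have hadd : ∀ (x : α), (v₁ + v₂) x = v₁ x + v₂ x := by
      intro x
      rw [@SimpleFunc.coe_add _ _ m _ v₁ v₂]
      rfl
    have haddf : (fun x => ⟪(v₁ + v₂) x, g x⟫)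
        = (fun x => ⟪v₁ x, g x⟫) + fun x => ⟪v₂ x, g x⟫ := by
      funext x
      rw [Pi.add_apply, hadd x, inner_add_left]
    calc μ[fun x => ⟪(v₁ + v₂) x, g x⟫|m]
        =ᵐ[μ] μ[(fun x => ⟪v₁ x, g x⟫) + fun x => ⟪v₂ x, g x⟫|m] := by rw [haddf]
      _ =ᵐ[μ] μ[fun x => ⟪v₁ x, g x⟫|m] + μ[fun x => ⟪v₂ x, g x⟫|m] :=
          condExp_add hint₁ hint₂ m
      _ =ᵐ[μ] fun x => ⟪(v₁ + v₂) x, (μ[g|m]) x⟫ := by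
          filter_upwards [h₁, h₂] with x hx₁ hx₂
          simp only [Pi.add_apply, hx₁, hx₂, hadd x, inner_add_left]

lemma polk_condexp_inner_of_bound (hm : m ≤ m0) [IsFiniteMeasure μ] {v g : α → H}
    (hv : StronglyMeasurable[m] v) (c : ℝ) (hvb : ∀ x, ‖v x‖ ≤ c) (hg : Integrable g μ) :
    μ[fun x => ⟪v x, g x⟫|m] =ᵐ[μ] fun x => ⟪v x, (μ[g|m]) x⟫ := by
  by_cases hμ : μ = 0
  · rw [hμ]
    unfold Filter.EventuallyEq
    rw [ae_zero]
    exact Filter.eventually_bot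
  have hc : 0 ≤ c := by
    have : (ae μ).NeBot := ae_neBot.2 hμ
    obtain ⟨x, hx⟩ := (Eventually.of_forall hvb : ∀ᵐ x ∂μ, ‖v x‖ ≤ c).exists
    exact (norm_nonneg _).trans hx
  let fs := hv.approxBounded c
  have hfs_tendsto : ∀ᵐ x ∂μ, Tendsto (fun n => fs n x) atTop (𝓝 (v x)) :=
    hv.tendsto_approxBounded_ae (Eventually.of_forall hvb)
  have hfs_bound : ∀ n x, ‖fs n x‖ ≤ c := hv.norm_approxBounded_le hc
  have hkey : μ[fun x => ⟪v x, (μ[g|m]) x⟫|m] = fun x => ⟪v x, (μ[g|m]) x⟫ :=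
    condExp_of_stronglyMeasurable hm (hv.inner stronglyMeasurable_condExp)
      (polk_integrable_inner_of_bound ((hv.mono hm).aestronglyMeasurable) c hvb
        integrable_condExp)
  rw [← hkey]
  refine tendsto_condExp_unique (fun n x => ⟪fs n x, g x⟫) (fun n x => ⟪fs n x, (μ[g|m]) x⟫)
    (fun x => ⟪v x, g x⟫) (fun x => ⟪v x, (μ[g|m]) x⟫) ?_ ?_ ?_ ?_
    (fun x => c * ‖g x‖) ?_ (fun x => c * ‖(μ[g|m]) x‖) ?_ ?_ ?_ ?_
  · exact fun n => polk_integrable_inner_of_bound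
      (((fs n).stronglyMeasurable.mono hm).aestronglyMeasurable) c (hfs_bound n) hg
  · exact fun n => polk_integrable_inner_of_bound
      (((fs n).stronglyMeasurable.mono hm).aestronglyMeasurable) c (hfs_bound n)
      integrable_condExp
  · filter_upwards [hfs_tendsto] with x hx
    exact hx.inner tendsto_const_nhds
  · filter_upwards [hfs_tendsto] with x hx
    exact hx.inner tendsto_const_nhds
  · exact hg.norm.const_mul c
  · exact integrable_condExp.norm.const_mul c
  · exact fun n => Eventually.of_forall fun x =>
      le_trans (norm_inner_le_norm _ _)
        (mul_le_mul_of_nonneg_right (hfs_bound n x) (norm_nonneg _))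
  · exact fun n => Eventually.of_forall fun x =>
      le_trans (norm_inner_le_norm _ _)
        (mul_le_mul_of_nonneg_right (hfs_bound n x) (norm_nonneg _))
  · intro n
    refine (polk_condexp_simpleFunc_inner hm (fs n) hg).trans ?_
    rw [condExp_of_stronglyMeasurable hm
      ((fs n).stronglyMeasurable.inner stronglyMeasurable_condExp)
      (polk_integrable_inner_of_bound
        (((fs n).stronglyMeasurable.mono hm).aestronglyMeasurable) c (hfs_bound n)
        integrable_condExp)]

end PullOut

/-- **Stochastic descent relation for POLK.**
For each `t`, the POLK iterates satisfy
`E[‖f_{t+1} − f*‖² | F_t] ≤ ‖f_t − f*‖² − 2η_t (R(f_t) − R(f*)) + 2ε_t ‖f_t − f*‖ + η_t² σ²`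
almost surely. -/
theorem polk_stochastic_descent
    {H : Type*} [NormedAddCommGroup H] [InnerProductSpace ℝ H] [CompleteSpace H]
    {X : Type*} [MetricSpace X] [CompactSpace X] [MeasurableSpace X]
    {Y : Type*} [MeasurableSpace Y]
    (φ : X → H) (hφc : Continuous φ) (X₀ : ℝ) (hφb : ∀ x, ‖φ x‖ ≤ X₀)
    (ℓ ℓ' : ℝ → Y → ℝ) (C : ℝ≥0)
    (hconv : ∀ y, ConvexOn ℝ Set.univ fun z => ℓ z y)
    (hlip : ∀ y, LipschitzWith C fun z => ℓ z y)
    (hderiv : ∀ z y, HasDerivAt (fun z' => ℓ z' y) (ℓ' z y) z)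
    (μ : Measure (X × Y)) [IsProbabilityMeasure μ]
    (lam : ℝ) (hlam : 0 < lam)
    (R : H → ℝ)
    (hR : ∀ f, R f = (∫ p, ℓ ⟪f, φ p.1⟫ p.2 ∂μ) + lam / 2 * ‖f‖ ^ 2)
    (hRconv : ConvexOn ℝ Set.univ R)
    (gradR : H → H) (hgrad : ∀ f, HasGradientAt R (gradR f) f)
    (fstar : H) (hfstar : ∀ f, R fstar ≤ R f)
    {Ω : Type*} {m0 : MeasurableSpace Ω} (P : Measure Ω) [IsProbabilityMeasure P]
    (ℱ : Filtration ℕ m0)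
    (ξ : ℕ → Ω → X × Y)
    (hlaw : ∀ t, Measure.map (ξ t) P = μ)
    (hiid : ProbabilityTheory.iIndepFun ξ P)
    (hindep : ∀ t,
      ProbabilityTheory.Indep (MeasurableSpace.comap (ξ t) inferInstance) (ℱ t) P)
    (hmeas : ∀ t, Measurable[ℱ (t + 1)] (ξ t))
    (η : ℕ → ℝ) (hηpos : ∀ t, 0 < η t) (hηlam : ∀ t, η t < 1 / lam)
    (ε : ℕ → ℝ) (hε : ∀ t, 0 ≤ ε t)
    (f : ℕ → Ω → H) (hf0 : ∀ ω, f 0 ω = 0)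
    (hadapted : StronglyAdapted ℱ f)
    -- the projected stochastic gradient `∇̃_t`:
    (gtil : ℕ → Ω → H)
    (hupdate : ∀ t ω, f (t + 1) ω = f t ω - η t • gtil t ω)
    -- bias bound `‖∇̃_t − ∇̂_t‖ ≤ ε_t/η_t`, with
    -- `∇̂_t = ℓ'(f_t(x_t),y_t) φ(x_t) + λ f_t`:
    (hbias : ∀ t ω,
      ‖gtil t ω - (ℓ' ⟪f t ω, φ (ξ t ω).1⟫ (ξ t ω).2 • φ (ξ t ω).1 + lam • f t ω)‖
        ≤ ε t / η t)
    (σ : ℝ)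
    -- unbiasedness of the regularized stochastic gradient:
    (hunbiased : ∀ t,
      P[(fun ω => ℓ' ⟪f t ω, φ (ξ t ω).1⟫ (ξ t ω).2 • φ (ξ t ω).1 + lam • f t ω) | ℱ t]
        =ᵐ[P] fun ω => gradR (f t ω))
    -- finite conditional second moment of the projected stochastic gradient:
    (hvar : ∀ t, ∀ᵐ ω ∂P, (P[(fun ω' => ‖gtil t ω'‖ ^ 2) | ℱ t]) ω ≤ σ ^ 2) :
    ∀ t, ∀ᵐ ω ∂P,
      (P[(fun ω' => ‖f (t + 1) ω' - fstar‖ ^ 2) | ℱ t]) ω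
        ≤ ‖f t ω - fstar‖ ^ 2 - 2 * η t * (R (f t ω) - R fstar)
          + 2 * ε t * ‖f t ω - fstar‖ + η t ^ 2 * σ ^ 2 := by

  intro t
  rcases isEmpty_or_nonempty Ω with hΩ | hΩ
  · exact Filter.Eventually.of_forall fun ω => (IsEmpty.false ω).elim
  have hm : ℱ t ≤ m0 := ℱ.le t
  haveI : SigmaFinite (P.trim hm) := by infer_instance
  have hvar' := hvar t
  have hunb' := hunbiased t
  -- basic bounds
  have hX₀ : 0 ≤ X₀ := by
    obtain ⟨ω⟩ := hΩ
    exact (norm_nonneg _).trans (hφb (ξ t ω).1)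
  have hC : ∀ z y, |ℓ' z y| ≤ C := fun z y => polk_deriv_bound (hlip y) (hderiv z y)
  have hεη : ∀ s, 0 ≤ ε s / η s := fun s => div_nonneg (hε s) (hηpos s).le
  have hghb : ∀ s (ω : Ω),
      ‖ℓ' ⟪f s ω, φ (ξ s ω).1⟫ (ξ s ω).2 • φ (ξ s ω).1 + lam • f s ω‖
        ≤ C * X₀ + lam * ‖f s ω‖ := by
    intro s ω
    refine (norm_add_le _ _).trans ?_
    rw [norm_smul, norm_smul, Real.norm_eq_abs, Real.norm_eq_abs, abs_of_pos hlam]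
    exact add_le_add (mul_le_mul (hC _ _) (hφb _) (norm_nonneg _) C.coe_nonneg) le_rfl
  have hgtb : ∀ s (ω : Ω), ‖gtil s ω‖ ≤ C * X₀ + lam * ‖f s ω‖ + ε s / η s := by
    intro s ω
    have h1 := hbias s ω
    have h2 := hghb s ω
    calc ‖gtil s ω‖
        = ‖(gtil s ω - (ℓ' ⟪f s ω, φ (ξ s ω).1⟫ (ξ s ω).2 • φ (ξ s ω).1 + lam • f s ω))
            + (ℓ' ⟪f s ω, φ (ξ s ω).1⟫ (ξ s ω).2 • φ (ξ s ω).1 + lam • f s ω)‖ := by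
          rw [sub_add_cancel]
      _ ≤ ‖gtil s ω - (ℓ' ⟪f s ω, φ (ξ s ω).1⟫ (ξ s ω).2 • φ (ξ s ω).1 + lam • f s ω)‖
            + ‖ℓ' ⟪f s ω, φ (ξ s ω).1⟫ (ξ s ω).2 • φ (ξ s ω).1 + lam • f s ω‖ :=
          norm_add_le _ _
      _ ≤ C * X₀ + lam * ‖f s ω‖ + ε s / η s := by linarith
  -- uniform bound on the iterates
  have hfB : ∀ s, ∃ B : ℝ, 0 ≤ B ∧ ∀ ω, ‖f s ω‖ ≤ B := by
    intro s
    induction s with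
    | zero => exact ⟨0, le_refl 0, fun ω => by simp [hf0]⟩
    | succ n ih =>
      obtain ⟨B, hB0, hB⟩ := ih
      have hKnn : 0 ≤ C * X₀ + lam * B + ε n / η n := by
        have := hεη n
        have h1 : (0:ℝ) ≤ C * X₀ := mul_nonneg C.coe_nonneg hX₀
        nlinarith
      refine ⟨B + η n * (C * X₀ + lam * B + ε n / η n),
        by nlinarith [(hηpos n).le], fun ω => ?_⟩
      have hb1 : ‖gtil n ω‖ ≤ C * X₀ + lam * B + ε n / η n := by
        have := hgtb n ω
        have := hB ω
        nlinarith
      rw [hupdate n ω]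
      calc ‖f n ω - η n • gtil n ω‖ ≤ ‖f n ω‖ + ‖η n • gtil n ω‖ := norm_sub_le _ _
        _ = ‖f n ω‖ + η n * ‖gtil n ω‖ := by
            rw [norm_smul, Real.norm_eq_abs, abs_of_pos (hηpos n)]
        _ ≤ B + η n * (C * X₀ + lam * B + ε n / η n) :=
            add_le_add (hB ω) (mul_le_mul_of_nonneg_left hb1 (hηpos n).le)
  obtain ⟨B, hB0, hBf⟩ := hfB t
  -- abbreviations
  set gh : Ω → H :=
    fun ω => ℓ' ⟪f t ω, φ (ξ t ω).1⟫ (ξ t ω).2 • φ (ξ t ω).1 + lam • f t ω with hghdef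
  set F1 : Ω → ℝ := fun ω => ‖f t ω - fstar‖ ^ 2 with hF1def
  set F2 : Ω → ℝ := fun ω => ⟪f t ω - fstar, gtil t ω⟫ with hF2def
  set F3 : Ω → ℝ := fun ω' => ‖gtil t ω'‖ ^ 2 with hF3def
  -- more bounds
  have hvb : ∀ ω, ‖f t ω - fstar‖ ≤ B + ‖fstar‖ := fun ω =>
    (norm_sub_le _ _).trans (add_le_add_left (hBf ω) _)
  have hghbd : ∀ ω, ‖gh ω‖ ≤ C * X₀ + lam * B := by
    intro ω
    have h1 := hghb t ω
    have h2 := hBf ω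
    have : lam * ‖f t ω‖ ≤ lam * B := mul_le_mul_of_nonneg_left h2 hlam.le
    rw [hghdef]
    dsimp only
    linarith
  have hgtbd : ∀ ω, ‖gtil t ω‖ ≤ C * X₀ + lam * B + ε t / η t := by
    intro ω
    have h1 := hgtb t ω
    have h2 := hBf ω
    have : lam * ‖f t ω‖ ≤ lam * B := mul_le_mul_of_nonneg_left h2 hlam.le
    linarith
  -- measurability
  have hvm : StronglyMeasurable[ℱ t] (fun ω => f t ω - fstar) :=
    (hadapted t).sub stronglyMeasurable_const
  have hgtm : AEStronglyMeasurable (gtil t) P := by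
    have hfun : gtil t = fun ω => (η t)⁻¹ • (f t ω - f (t + 1) ω) := by
      funext ω
      rw [hupdate t ω, sub_sub_cancel, smul_smul, inv_mul_cancel₀ (hηpos t).ne', one_smul]
    rw [hfun]
    exact ((((hadapted t).mono hm).sub
      ((hadapted (t + 1)).mono (ℱ.le (t + 1)))).const_smul _).aestronglyMeasurable
  -- integrability
  have hgt_int : Integrable (gtil t) P :=
    (integrable_const (C * X₀ + lam * B + ε t / η t)).mono' hgtm
      (Filter.Eventually.of_forall fun ω => hgtbd ω)
  have hF1m : StronglyMeasurable[ℱ t] F1 :=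
    (continuous_pow 2).comp_stronglyMeasurable hvm.norm
  have hF1int : Integrable F1 P :=
    (integrable_const ((B + ‖fstar‖) ^ 2)).mono'
      ((hF1m.mono hm).aestronglyMeasurable)
      (Filter.Eventually.of_forall fun ω => by
        rw [hF1def]
        simp only [Real.norm_eq_abs, abs_pow, sq_abs]
        exact pow_le_pow_left₀ (norm_nonneg _) (hvb ω) 2)
  have hF2int : Integrable F2 P :=
    polk_integrable_inner_of_bound ((hvm.mono hm).aestronglyMeasurable)
      (B + ‖fstar‖) hvb hgt_int
  have hF3int : Integrable F3 P :=
    (integrable_const ((C * X₀ + lam * B + ε t / η t) ^ 2)).mono'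
      ((continuous_pow 2).comp_aestronglyMeasurable hgtm.norm)
      (Filter.Eventually.of_forall fun ω => by
        rw [hF3def]
        simp only [Real.norm_eq_abs, abs_pow, sq_abs]
        exact pow_le_pow_left₀ (norm_nonneg _) (hgtbd ω) 2)
  -- the pointwise expansion
  have hiden : (fun ω' => ‖f (t + 1) ω' - fstar‖ ^ 2)
      = F1 + ((-(2 * η t)) • F2 + ((η t) ^ 2) • F3) := by
    funext ω
    simp only [Pi.add_apply, Pi.smul_apply, smul_eq_mul, hF1def, hF2def, hF3def]
    have h1 : f (t + 1) ω - fstar = (f t ω - fstar) - η t • gtil t ω := by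
      rw [hupdate t ω, sub_right_comm]
    rw [h1, norm_sub_sq_real, real_inner_smul_right, norm_smul, Real.norm_eq_abs,
      mul_pow, sq_abs]
    ring
  -- conditional expectation expansion
  have hE : P[fun ω' => ‖f (t + 1) ω' - fstar‖ ^ 2|ℱ t]
      =ᵐ[P] fun ω => F1 ω + ((-(2 * η t)) * (P[F2|ℱ t]) ω + ((η t) ^ 2) * (P[F3|ℱ t]) ω) := by
    rw [hiden]
    have h2int : Integrable ((-(2 * η t)) • F2 + ((η t) ^ 2) • F3) P :=
      (hF2int.smul _).add (hF3int.smul _)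
    have e1 := condExp_add (μ := P) (m := ℱ t) hF1int h2int
    have e2 := condExp_add (μ := P) (m := ℱ t) (hF2int.smul (-(2 * η t)))
      (hF3int.smul ((η t) ^ 2))
    have e3 := condExp_smul (μ := P) (m := ℱ t) (-(2 * η t)) F2
    have e4 := condExp_smul (μ := P) (m := ℱ t) ((η t) ^ 2) F3
    have e5 : P[F1|ℱ t] = F1 := condExp_of_stronglyMeasurable hm hF1m hF1int
    filter_upwards [e1, e2, e3, e4] with ω w1 w2 w3 w4
    rw [w1, Pi.add_apply, e5, w2, Pi.add_apply, w3, w4, Pi.smul_apply, Pi.smul_apply,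
      smul_eq_mul, smul_eq_mul]
  by_cases hint_gh : Integrable gh P
  · -- `gh` integrable: the standard argument
    have hF2a_int : Integrable (fun ω => ⟪f t ω - fstar, gh ω⟫) P :=
      polk_integrable_inner_of_bound ((hvm.mono hm).aestronglyMeasurable)
        (B + ‖fstar‖) hvb hint_gh
    have hF2b_int : Integrable (fun ω => ⟪f t ω - fstar, gtil t ω - gh ω⟫) P :=
      polk_integrable_inner_of_bound ((hvm.mono hm).aestronglyMeasurable)
        (B + ‖fstar‖) hvb (hgt_int.sub hint_gh)
    have hsplit : F2 = (fun ω => ⟪f t ω - fstar, gh ω⟫)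
        + fun ω => ⟪f t ω - fstar, gtil t ω - gh ω⟫ := by
      funext ω
      simp only [hF2def, Pi.add_apply, inner_sub_right]
      ring
    have e6 := condExp_add (μ := P) (m := ℱ t) hF2a_int hF2b_int
    have e7 : P[fun ω => ⟪f t ω - fstar, gh ω⟫|ℱ t]
        =ᵐ[P] fun ω => ⟪f t ω - fstar, gradR (f t ω)⟫ := by
      refine (polk_condexp_inner_of_bound hm hvm (B + ‖fstar‖) hvb hint_gh).trans ?_
      filter_upwards [hunb'] with ω hω
      rw [hω]
    have e8 : ∀ ω, R (f t ω) - R fstar ≤ ⟪f t ω - fstar, gradR (f t ω)⟫ := by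
      intro ω
      have h := polk_gradient_ineq hRconv (hgrad (f t ω)) fstar
      have h2 : fstar - f t ω = -(f t ω - fstar) := by abel
      rw [h2, inner_neg_right, real_inner_comm] at h
      linarith
    have e9 : ∀ ω, -(ε t / η t * ‖f t ω - fstar‖)
        ≤ ⟪f t ω - fstar, gtil t ω - gh ω⟫ := by
      intro ω
      have h1 := abs_real_inner_le_norm (f t ω - fstar) (gtil t ω - gh ω)
      have h2 : ‖f t ω - fstar‖ * ‖gtil t ω - gh ω‖ ≤ ε t / η t * ‖f t ω - fstar‖ := by
        rw [mul_comm]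
        exact mul_le_mul_of_nonneg_right (hbias t ω) (norm_nonneg _)
      have h3 := neg_abs_le ⟪f t ω - fstar, gtil t ω - gh ω⟫
      linarith
    have hψm : StronglyMeasurable[ℱ t] (fun ω => -(ε t / η t * ‖f t ω - fstar‖)) :=
      (stronglyMeasurable_const.mul hvm.norm).neg
    have hψint : Integrable (fun ω => -(ε t / η t * ‖f t ω - fstar‖)) P :=
      (integrable_const (ε t / η t * (B + ‖fstar‖))).mono'
        ((hψm.mono hm).aestronglyMeasurable)
        (Filter.Eventually.of_forall fun ω => by
          rw [norm_neg, Real.norm_eq_abs, abs_of_nonneg (mul_nonneg (hεη t) (norm_nonneg _))]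
          exact mul_le_mul_of_nonneg_left (hvb ω) (hεη t))
    have e10 : ∀ᵐ ω ∂P, -(ε t / η t * ‖f t ω - fstar‖)
        ≤ (P[fun ω' => ⟪f t ω' - fstar, gtil t ω' - gh ω'⟫|ℱ t]) ω := by
      have hmono := condExp_mono (μ := P) (m := ℱ t) hψint hF2b_int
        (Filter.Eventually.of_forall e9)
      have heq : P[fun ω => -(ε t / η t * ‖f t ω - fstar‖)|ℱ t]
          = fun ω => -(ε t / η t * ‖f t ω - fstar‖) :=
        condExp_of_stronglyMeasurable hm hψm hψint
      rw [heq] at hmono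
      exact hmono
    have hlow : ∀ᵐ ω ∂P, (R (f t ω) - R fstar) - ε t / η t * ‖f t ω - fstar‖
        ≤ (P[F2|ℱ t]) ω := by
      rw [hsplit]
      filter_upwards [e6, e7, e10] with ω w6 w7 w10
      rw [w6, Pi.add_apply, w7]
      have := e8 ω
      linarith
    filter_upwards [hE, hlow, hvar'] with ω hEω hlowω hvarω
    rw [hEω]
    have hη := hηpos t
    have hεηω : η t * (ε t / η t) = ε t := by field_simp
    have ha : (-(2 * η t)) * (P[F2|ℱ t]) ω
        ≤ -(2 * η t) * (R (f t ω) - R fstar) + 2 * ε t * ‖f t ω - fstar‖ := by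
      have h1 := mul_le_mul_of_nonneg_left hlowω (by positivity : (0:ℝ) ≤ 2 * η t)
      have h2 : 2 * η t * (ε t / η t * ‖f t ω - fstar‖) = 2 * ε t * ‖f t ω - fstar‖ := by
        field_simp
      nlinarith [h1, h2]
    have hb : ((η t) ^ 2) * (P[F3|ℱ t]) ω ≤ (η t) ^ 2 * σ ^ 2 :=
      mul_le_mul_of_nonneg_left hvarω (sq_nonneg _)
    have hF1ω : F1 ω = ‖f t ω - fstar‖ ^ 2 := rfl
    linarith
  · -- `gh` not integrable: then `gradR (f t ·) = 0` a.e. and `f t = fstar` a.e.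
    have h0 : P[gh|ℱ t] = 0 := condExp_of_not_integrable hint_gh
    have hgrad0 : ∀ᵐ ω ∂P, gradR (f t ω) = 0 := by
      rw [h0] at hunb'
      filter_upwards [hunb'] with ω hω
      simpa using hω.symm
    have hmin : ∀ᵐ ω ∂P, f t ω = fstar := by
      filter_upwards [hgrad0] with ω hω
      exact polk_minimizer_unique φ ℓ hconv μ hlam hR hRconv hfstar
        (polk_minimizer_mem hRconv (hgrad (f t ω)) hω fstar)
    have hcongr : (fun ω' => ‖f (t + 1) ω' - fstar‖ ^ 2) =ᵐ[P] ((η t) ^ 2) • F3 := by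
      filter_upwards [hmin] with ω hω
      have h1 : f (t + 1) ω - fstar = (f t ω - fstar) - η t • gtil t ω := by
        rw [hupdate t ω, sub_right_comm]
      have h2 : f t ω - fstar = 0 := by rw [hω, sub_self]
      rw [h1, h2, zero_sub, norm_neg, Pi.smul_apply, smul_eq_mul, hF3def, norm_smul,
        Real.norm_eq_abs, mul_pow, sq_abs]
    have hEc := condExp_congr_ae (m := ℱ t) hcongr
    have e4 := condExp_smul (μ := P) (m := ℱ t) ((η t) ^ 2) F3
    filter_upwards [hEc, e4, hvar', hmin] with ω h1 h2 h3 h4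
    rw [h1, h2, Pi.smul_apply, smul_eq_mul]
    have h5 : f t ω - fstar = 0 := by rw [h4, sub_self]
    rw [h5]
    have hb : ((η t) ^ 2) * (P[F3|ℱ t]) ω ≤ (η t) ^ 2 * σ ^ 2 :=
      mul_le_mul_of_nonneg_left h3 (sq_nonneg _)
    rw [h4]
    simp only [norm_zero, sub_self]
    nlinarith [hb]
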